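/- There exists a constant C > 0 such that for every real s with |s| ≥ 2 and every real r with |r| ≤ 1, both |s·cosh(r·√(is))| ≤ C·|D(s)| and |s·sinh(r·√(is))| ≤ C·|D(s)| hold, where D(s) = (is)^{3/2}·cos(s)·cosh(√(is)) − s·sin(s)·sinh(√(is)). -/

import Mathlib

open Complex Real

lemma exp_half_log {t : ℝ} (ht : 0 < t) : Real.exp (Real.log t / 2) = Real.sqrt t := by
  rw [Real.sqrt_eq_rpow, Real.rpow_def_of_pos ht]
  ring_nf

lemma sqrt_half (t : ℝ) (ht : 0 ≤ t) : Real.sqrt (t/2) = Real.sqrt t * (Real.sqrt 2 / 2) := by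
  rw [show t/2 = t * (1/2) by ring, Real.sqrt_mul ht]
  congr 1
  rw [show (1:ℝ)/2 = 2⁻¹ by norm_num, Real.sqrt_inv]
  have h2 : (0:ℝ) < Real.sqrt 2 := Real.sqrt_pos.2 (by norm_num)
  have h3 : Real.sqrt 2 * Real.sqrt 2 = 2 := Real.mul_self_sqrt (by norm_num)
  field_simp
  rw [sq, h3]

lemma cpow_half_pos {s : ℝ} (hs : 0 < s) :
    (Complex.I * s) ^ (1/2 : ℂ) = (Real.sqrt (s/2) : ℂ) * (1 + Complex.I) := by
  have hne : Complex.I * s ≠ 0 := by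
    simp [Complex.ext_iff, hs.ne']
  rw [Complex.cpow_def_of_ne_zero hne]
  have harg : Complex.arg (Complex.I * s) = π / 2 := by
    rw [Complex.arg_eq_pi_div_two_iff]
    simp [hs]
  have habs : ‖Complex.I * s‖ = s := by
    simp [abs_of_pos hs]
  rw [Complex.log, habs, harg]
  have h1 : (↑(Real.log s) + ↑(π / 2) * Complex.I) * (1/2 : ℂ)
      = ↑(Real.log s / 2) + ↑(π / 4) * Complex.I := by
    push_cast; ring
  rw [h1, Complex.exp_add, Complex.exp_mul_I, ← Complex.ofReal_exp, exp_half_log hs,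
    ← Complex.ofReal_cos, ← Complex.ofReal_sin, Real.cos_pi_div_four, Real.sin_pi_div_four,
    sqrt_half s hs.le]
  push_cast
  ring

lemma cpow_half_neg {s : ℝ} (hs : s < 0) :
    (Complex.I * s) ^ (1/2 : ℂ) = (Real.sqrt (|s|/2) : ℂ) * (1 - Complex.I) := by
  have hne : Complex.I * s ≠ 0 := by
    simp [Complex.ext_iff, hs.ne]
  rw [Complex.cpow_def_of_ne_zero hne]
  have harg : Complex.arg (Complex.I * s) = -(π / 2) := by
    rw [Complex.arg_eq_neg_pi_div_two_iff]
    simp [hs]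
  have habs : ‖Complex.I * s‖ = |s| := by
    simp [abs_of_neg hs]
  rw [Complex.log, habs, harg]
  have h1 : (↑(Real.log |s|) + ↑(-(π / 2)) * Complex.I) * (1/2 : ℂ)
      = ↑(Real.log |s| / 2) + ↑(-(π / 4)) * Complex.I := by
    push_cast; ring
  have habs' : 0 < |s| := abs_pos.2 hs.ne
  rw [h1, Complex.exp_add, Complex.exp_mul_I, ← Complex.ofReal_exp, exp_half_log habs',
    ← Complex.ofReal_cos, ← Complex.ofReal_sin, Real.cos_neg, Real.sin_neg,
    Real.cos_pi_div_four, Real.sin_pi_div_four, sqrt_half _ habs'.le]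
  push_cast
  ring

lemma norm_le_of_sq {z : ℂ} {m : ℝ} (hm : 0 ≤ m) (h : z.re^2 + z.im^2 ≤ m^2) : ‖z‖ ≤ m := by
  have h1 : ‖z‖^2 = z.re^2 + z.im^2 := by
    rw [Complex.sq_norm, Complex.normSq_apply]
    ring
  nlinarith [norm_nonneg z]


lemma abs_le_one_of_sq (u v : ℝ) (h : u^2 + v^2 = 1) : |u| ≤ 1 := by
  nlinarith [sq_nonneg v, abs_nonneg u, _root_.sq_abs u]

lemma helper_b (A B c d x e : ℝ) (he : e^2 = 1) (hcd : c^2+d^2 = 1) (hAB : A^2 - B^2 = 1)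
    (hA : 1 ≤ A) (hx : 1 ≤ x) : (B*c)^2 + (e*(A*d))^2 ≤ (2*x*A)^2 := by
  nlinarith [sq_nonneg c, sq_nonneg d, sq_nonneg (B*c), sq_nonneg (A*d), sq_nonneg (x*A),
    sq_nonneg A, mul_le_mul hx hx zero_le_one (by linarith)]

lemma helper_a (A B c d x e : ℝ) (he : e^2 = 1) (hcd : c^2+d^2 = 1) (hAB : A^2 - B^2 = 1)
    (hA : 1 ≤ A) (hx : 1 ≤ x) :
    (x*(-(e*(A*c)) - e*(B*d)))^2 + (x*(A*c - B*d))^2 ≤ (2*x*A)^2 := by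
  have h1 : (x*(-(e*(A*c)) - e*(B*d)))^2 + (x*(A*c - B*d))^2
      = x^2 * (e^2*(A*c+B*d)^2 + (A*c-B*d)^2) := by ring
  rw [h1, he]
  have h2 : 1*(A*c+B*d)^2 + (A*c-B*d)^2 = 2*(A^2*c^2 + B^2*d^2) := by ring
  rw [h2]
  have h3 : A^2*c^2 + B^2*d^2 ≤ A^2 := by nlinarith [sq_nonneg c, sq_nonneg d, sq_nonneg B]
  have hx2 : 1 ≤ x^2 := by nlinarith
  nlinarith [sq_nonneg (x*A), sq_nonneg A, sq_nonneg x]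

lemma helper_final (A B E : ℝ) (h : A*B - 1/2 ≤ 4*A*E) (hA : 1 ≤ A) (hB : 1 ≤ B)
    (hAB1 : A ≤ B + 1) (hE : 0 ≤ E) : A ≤ 20*E := by
  nlinarith [mul_le_mul_of_nonneg_left hAB1 (by linarith : (0:ℝ) ≤ A),
    mul_le_mul_of_nonneg_left hB (by linarith : (0:ℝ) ≤ A)]

set_option maxHeartbeats 2000000 in
lemma core (x ε cs sn : ℝ) (hx : 1 ≤ x) (hε : ε = 1 ∨ ε = -1) (hpyth : cs^2 + sn^2 = 1) :
    Real.cosh x ≤ 20 * ‖Complex.I * ((x:ℂ)*(1+(ε:ℂ)*Complex.I)) * (cs:ℂ) *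
        Complex.cosh ((x:ℂ)*(1+(ε:ℂ)*Complex.I)) -
      (sn:ℂ) * Complex.sinh ((x:ℂ)*(1+(ε:ℂ)*Complex.I))‖ := by
  have he : ε^2 = 1 := by rcases hε with rfl | rfl <;> norm_num
  set w : ℂ := (x:ℂ)*(1+(ε:ℂ)*Complex.I) with hw
  set A := Real.cosh x with hA
  set B := Real.sinh x with hB
  set c := Real.cos x with hc
  set d := Real.sin x with hd
  -- explicit forms of cosh w and sinh w
  have hwe : w = (x:ℂ) + ((ε*x : ℝ):ℂ) * Complex.I := by rw [hw]; push_cast; ring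
  have hcosw : Real.cos (ε*x) = c := by
    rcases hε with rfl | rfl <;> simp [hc, Real.cos_neg]
  have hsinw : Real.sin (ε*x) = ε * d := by
    rcases hε with rfl | rfl <;> simp [hd]
  have hcosh : Complex.cosh w = ((A*c : ℝ):ℂ) + ((ε*(B*d) : ℝ):ℂ) * Complex.I := by
    rw [hwe, Complex.cosh_add, Complex.cosh_mul_I, Complex.sinh_mul_I,
      ← Complex.ofReal_cosh, ← Complex.ofReal_sinh, ← Complex.ofReal_cos, ← Complex.ofReal_sin,
      hcosw, hsinw]
    simp only [Complex.ofReal_mul]; ring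
  have hsinh : Complex.sinh w = ((B*c : ℝ):ℂ) + ((ε*(A*d) : ℝ):ℂ) * Complex.I := by
    rw [hwe, Complex.sinh_add, Complex.cosh_mul_I, Complex.sinh_mul_I,
      ← Complex.ofReal_cosh, ← Complex.ofReal_sinh, ← Complex.ofReal_cos, ← Complex.ofReal_sin,
      hcosw, hsinw]
    simp only [Complex.ofReal_mul]; ring
  set a : ℂ := Complex.I * w * Complex.cosh w with ha
  set b : ℂ := Complex.sinh w with hb
  set E : ℂ := (cs:ℂ) * a - (sn:ℂ) * b with hE
  have hEeq : Complex.I * w * (cs:ℂ) * Complex.cosh w - (sn:ℂ) * Complex.sinh w = E := by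
    rw [hE, ha, hb]; ring
  rw [hEeq]
  set K := x*(A*B + c*d) with hK
  -- the two pairing inequalities
  have hbare : b.re = B*c := by rw [hsinh]; simp
  have hbaim : b.im = ε*(A*d) := by rw [hsinh]; simp
  have haare : a.re = x*(-(ε*(A*c)) - ε*(B*d)) := by
    rw [ha, hcosh, hwe]
    simp [Complex.mul_re, Complex.mul_im]
    ring
  have haaim : a.im = x*(A*c - B*d) := by
    rw [ha, hcosh, hwe]
    simp [Complex.mul_re, Complex.mul_im]
    linear_combination (-(x*(B*d))) * he
  have haC : a = ((x*(-(ε*(A*c)) - ε*(B*d)) : ℝ) : ℂ) + ((x*(A*c - B*d) : ℝ):ℂ) * Complex.I := by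
    rw [← haare, ← haaim, Complex.re_add_im]
  -- basic real facts
  have hnx : (0:ℝ) < x := lt_of_lt_of_le one_pos hx
  have hA1 : 1 ≤ A := Real.one_le_cosh x
  have hB1 : 1 ≤ B := le_trans hx (Real.self_le_sinh_iff.2 (by linarith))
  have hAB1 : A ≤ B + 1 := by
    have h1 := Real.cosh_sub_sinh x
    have h2 : Real.exp (-x) ≤ 1 := Real.exp_le_one_iff.2 (by linarith)
    rw [hA, hB]; linarith
  have hcd1 : c^2 + d^2 = 1 := by rw [hc, hd]; exact Real.cos_sq_add_sin_sq x
  have hABsq : A^2 - B^2 = 1 := by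
    rw [hA, hB]; have := Real.cosh_sq_sub_sinh_sq x; linarith
  have hcdge : -(1/2 : ℝ) ≤ c*d := by nlinarith [sq_nonneg (c+d), hcd1]
  have hab : (1:ℝ) ≤ A*B := by
    have := mul_le_mul hA1 hB1 zero_le_one (by linarith : (0:ℝ) ≤ A)
    linarith
  have hKge : x*(A*B - 1/2) ≤ K := by
    rw [hK]
    exact mul_le_mul_of_nonneg_left (by linarith) hnx.le
  have hKpos : 0 < K := by
    rw [hK]
    exact mul_pos hnx (by linarith)
  have hEnn : (0:ℝ) ≤ ‖E‖ := norm_nonneg E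
  have hcs1 : |cs| ≤ 1 := abs_le_one_of_sq cs sn hpyth
  have hsn1 : |sn| ≤ 1 := abs_le_one_of_sq sn cs (by linarith)
  -- pairing inequalities
  have key1 : |cs| * K ≤ ‖b‖ * ‖E‖ := by
    have him : ((starRingEnd ℂ) b * E).im = cs * K := by
      rw [hE, haC, hsinh, hK]
      simp [Complex.mul_im, Complex.mul_re, Complex.conj_ofReal, map_add, map_mul, Complex.conj_I]
      ring_nf
      linear_combination (cs*x*A*B)*hcd1 + (cs*x*c*d)*hABsq + (cs*x*(A^2*c*d + A*B*d^2))*he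
    have h1 : |((starRingEnd ℂ) b * E).im| ≤ ‖(starRingEnd ℂ) b * E‖ := by
      exact Complex.abs_im_le_norm _
    rw [him, norm_mul, RCLike.norm_conj, abs_mul, abs_of_pos hKpos] at h1
    exact h1
  have key2 : |sn| * K ≤ ‖a‖ * ‖E‖ := by
    have him : ((starRingEnd ℂ) a * E).im = sn * K := by
      rw [hE, haC, hsinh, hK]
      simp [Complex.mul_im, Complex.mul_re, Complex.conj_ofReal, map_add, map_mul, Complex.conj_I]
      ring_nf
      linear_combination (sn*x*A*B)*hcd1 + (sn*x*c*d)*hABsq + (sn*x*(A^2*c*d + A*B*d^2))*he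
    have h1 : |((starRingEnd ℂ) a * E).im| ≤ ‖(starRingEnd ℂ) a * E‖ := by
      exact Complex.abs_im_le_norm _
    rw [him, norm_mul, RCLike.norm_conj, abs_mul, abs_of_pos hKpos] at h1
    exact h1
  -- norm bounds
  have hnb : ‖b‖ ≤ 2*x*A := by
    apply norm_le_of_sq (by positivity)
    rw [hbare, hbaim]
    exact helper_b A B c d x ε he hcd1 hABsq hA1 hx
  have hna : ‖a‖ ≤ 2*x*A := by
    apply norm_le_of_sq (by positivity)
    rw [haare, haaim]
    exact helper_a A B c d x ε he hcd1 hABsq hA1 hx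
  -- combine
  have t1 : cs^2 * K ≤ 2*x*A*‖E‖ := by
    have h1 : |cs| * (|cs| * K) ≤ |cs| * (‖b‖*‖E‖) := mul_le_mul_of_nonneg_left key1 (abs_nonneg cs)
    have h2 : ‖b‖*‖E‖ ≤ 2*x*A*‖E‖ := mul_le_mul_of_nonneg_right hnb hEnn
    have h3 : |cs| * (‖b‖*‖E‖) ≤ 1 * (2*x*A*‖E‖) :=
      mul_le_mul hcs1 h2 (by positivity) (by norm_num)
    calc cs^2 * K = |cs| * (|cs| * K) := by rw [← _root_.sq_abs]; ring
    _ ≤ |cs| * (‖b‖*‖E‖) := h1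
    _ ≤ 1 * (2*x*A*‖E‖) := h3
    _ = 2*x*A*‖E‖ := one_mul _
  have t2 : sn^2 * K ≤ 2*x*A*‖E‖ := by
    have h1 : |sn| * (|sn| * K) ≤ |sn| * (‖a‖*‖E‖) := mul_le_mul_of_nonneg_left key2 (abs_nonneg sn)
    have h2 : ‖a‖*‖E‖ ≤ 2*x*A*‖E‖ := mul_le_mul_of_nonneg_right hna hEnn
    have h3 : |sn| * (‖a‖*‖E‖) ≤ 1 * (2*x*A*‖E‖) :=
      mul_le_mul hsn1 h2 (by positivity) (by norm_num)
    calc sn^2 * K = |sn| * (|sn| * K) := by rw [← _root_.sq_abs]; ring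
    _ ≤ |sn| * (‖a‖*‖E‖) := h1
    _ ≤ 1 * (2*x*A*‖E‖) := h3
    _ = 2*x*A*‖E‖ := one_mul _
  have hsum : cs^2*K + sn^2*K = K := by linear_combination K * hpyth
  have hcomb : K ≤ 4*x*A*‖E‖ := by linarith
  -- final
  have hdiv : A*B - 1/2 ≤ 4*A*‖E‖ := by
    have h1 : x*(A*B - 1/2) ≤ x*(4*A*‖E‖) := by
      calc x*(A*B - 1/2) ≤ K := hKge
      _ ≤ 4*x*A*‖E‖ := hcomb
      _ = x*(4*A*‖E‖) := by ring
    exact le_of_mul_le_mul_left h1 hnx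
  exact helper_final A B ‖E‖ hdiv hA1 hB1 hAB1 hEnn


lemma norm_cosh_le (z : ℂ) : ‖Complex.cosh z‖ ≤ Real.cosh z.re := by
  have h1 : ‖Complex.exp z + Complex.exp (-z)‖ ≤ Real.exp z.re + Real.exp (-z.re) := by
    refine (norm_add_le _ _).trans ?_
    simp [Complex.norm_exp]
  have h2 : ‖(2:ℂ)‖ = 2 := by simp
  rw [Complex.cosh, norm_div, Real.cosh_eq, h2]
  linarith

lemma norm_sinh_le (z : ℂ) : ‖Complex.sinh z‖ ≤ Real.cosh z.re := by
  have h1 : ‖Complex.exp z - Complex.exp (-z)‖ ≤ Real.exp z.re + Real.exp (-z.re) := by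
    refine (norm_sub_le _ _).trans ?_
    simp [Complex.norm_exp]
  have h2 : ‖(2:ℂ)‖ = 2 := by simp
  rw [Complex.sinh, norm_div, Real.cosh_eq, h2]
  linarith


/-- The determinant `D(s) = (is)^{3/2}·cos(s)·cosh(√(is)) − s·sin(s)·sinh(√(is))` of the
coupling matrix of the wave-heat resolvent equation, where `√(is)` is the principal
branch of the complex square root and `(is)^{3/2} = (√(is))³`. -/
noncomputable def couplingDet (s : ℝ) : ℂ :=
  ((Complex.I * s) ^ (1/2 : ℂ)) ^ 3 * Complex.cos s *
      Complex.cosh ((Complex.I * s) ^ (1/2 : ℂ)) -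
    (s : ℂ) * Complex.sin s * Complex.sinh ((Complex.I * s) ^ (1/2 : ℂ))

set_option maxHeartbeats 1000000 in
/-- There is a constant `C > 0` such that for all real `s` with `|s| ≥ 2` and all real `r`
with `|r| ≤ 1`, both `|s·cosh(r√(is))| ≤ C·|D(s)|` and `|s·sinh(r√(is))| ≤ C·|D(s)|`. -/
theorem coupling_determinant_dominates :
    ∃ C : ℝ, 0 < C ∧ ∀ s : ℝ, 2 ≤ |s| → ∀ r : ℝ, |r| ≤ 1 →
      ‖(s : ℂ) * Complex.cosh ((r : ℂ) * (Complex.I * s) ^ (1/2 : ℂ))‖ ≤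
          C * ‖couplingDet s‖ ∧
        ‖(s : ℂ) * Complex.sinh ((r : ℂ) * (Complex.I * s) ^ (1/2 : ℂ))‖ ≤
          C * ‖couplingDet s‖ := by
  refine ⟨20, by norm_num, fun s hs r hr => ?_⟩
  have hs0 : s ≠ 0 := by
    intro h; rw [h] at hs; simp at hs; linarith
  set x : ℝ := Real.sqrt (|s|/2) with hxdef
  have hx : 1 ≤ x := by
    rw [hxdef, show (1:ℝ) = Real.sqrt 1 from Real.sqrt_one.symm]
    exact Real.sqrt_le_sqrt (by linarith)
  set ε : ℝ := if 0 ≤ s then 1 else -1 with hεdef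
  have hεor : ε = 1 ∨ ε = -1 := by
    rw [hεdef]; split <;> simp
  have he : ε^2 = 1 := by rcases hεor with h | h <;> rw [h] <;> norm_num
  have hεs : ε * |s| = s := by
    rw [hεdef]; split
    · rw [_root_.abs_of_nonneg (by assumption)]; ring
    · rw [_root_.abs_of_neg (by linarith [not_le.1 (by assumption)])]; ring
  have hcpow : (Complex.I * s) ^ (1/2 : ℂ) = (x:ℂ) * (1 + (ε:ℝ) * Complex.I) := by
    rcases lt_or_gt_of_ne hs0 with hneg | hpos
    · rw [cpow_half_neg hneg, hεdef, if_neg (not_le.2 hneg), hxdef]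
      push_cast; ring
    · rw [cpow_half_pos hpos, hεdef, if_pos hpos.le, hxdef, _root_.abs_of_pos hpos]
      push_cast; ring
  set w : ℂ := (x:ℂ) * (1 + (ε:ℂ) * Complex.I) with hwdef
  have hx2r : x^2 = |s|/2 := Real.sq_sqrt (by positivity)
  have hw2 : w^2 = (s:ℂ) * Complex.I := by
    rw [hwdef]
    have hc1 : ((ε:ℝ):ℂ)^2 = 1 := by exact_mod_cast he
    have hc2 : ((x:ℝ):ℂ)^2 = ((|s|:ℝ):ℂ)/2 := by exact_mod_cast hx2r
    have hc3 : ((ε:ℝ):ℂ) * ((|s|:ℝ):ℂ) = (s:ℂ) := by exact_mod_cast hεs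
    have hc4 : Complex.I^2 = -1 := Complex.I_sq
    linear_combination ((x:ℂ)^2*Complex.I^2) * hc1 + ((x:ℂ)^2) * hc4 +
      (2*(ε:ℂ)*Complex.I) * hc2 + Complex.I * hc3
  have hcore : Real.cosh x ≤ 20 * ‖Complex.I * w * ((Real.cos s : ℝ):ℂ) * Complex.cosh w -
      ((Real.sin s : ℝ):ℂ) * Complex.sinh w‖ :=
    core x ε (Real.cos s) (Real.sin s) hx hεor (Real.cos_sq_add_sin_sq s)
  have hD : couplingDet s = (s:ℂ) * (Complex.I * w * ((Real.cos s : ℝ):ℂ) * Complex.cosh w -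
      ((Real.sin s : ℝ):ℂ) * Complex.sinh w) := by
    rw [couplingDet, hcpow]
    have hw3 : w^3 = (s:ℂ)*Complex.I*w := by
      have h1 : w^3 = w^2 * w := by ring
      rw [h1, hw2]
    rw [← Complex.ofReal_cos, ← Complex.ofReal_sin, hw3]
    ring
  have hDnorm : ‖couplingDet s‖ = |s| * ‖Complex.I * w * ((Real.cos s : ℝ):ℂ) * Complex.cosh w -
      ((Real.sin s : ℝ):ℂ) * Complex.sinh w‖ := by
    rw [hD, norm_mul, Complex.norm_real, Real.norm_eq_abs]
  have hre : ((r:ℂ) * w).re = r * x := by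
    rw [hwdef]
    simp [Complex.mul_re, Complex.mul_im]
  have hcoshrx : Real.cosh (r*x) ≤ Real.cosh x := by
    rw [Real.cosh_le_cosh, abs_mul]
    have h1 : |r| * |x| ≤ 1 * |x| := mul_le_mul_of_nonneg_right hr (abs_nonneg x)
    linarith
  have hup1 : ‖Complex.cosh ((r:ℂ) * w)‖ ≤ Real.cosh x := by
    refine (norm_cosh_le _).trans ?_
    rw [hre]; exact hcoshrx
  have hup2 : ‖Complex.sinh ((r:ℂ) * w)‖ ≤ Real.cosh x := by
    refine (norm_sinh_le _).trans ?_
    rw [hre]; exact hcoshrx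
  rw [hcpow]
  constructor
  · rw [norm_mul, Complex.norm_real, Real.norm_eq_abs, hDnorm]
    calc |s| * ‖Complex.cosh ((r:ℂ)*w)‖ ≤ |s| * (20 * ‖Complex.I * w * ((Real.cos s : ℝ):ℂ) *
          Complex.cosh w - ((Real.sin s : ℝ):ℂ) * Complex.sinh w‖) :=
        mul_le_mul_of_nonneg_left (hup1.trans hcore) (abs_nonneg s)
    _ = 20 * (|s| * ‖Complex.I * w * ((Real.cos s : ℝ):ℂ) * Complex.cosh w -
          ((Real.sin s : ℝ):ℂ) * Complex.sinh w‖) := by ring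
  · rw [norm_mul, Complex.norm_real, Real.norm_eq_abs, hDnorm]
    calc |s| * ‖Complex.sinh ((r:ℂ)*w)‖ ≤ |s| * (20 * ‖Complex.I * w * ((Real.cos s : ℝ):ℂ) *
          Complex.cosh w - ((Real.sin s : ℝ):ℂ) * Complex.sinh w‖) :=
        mul_le_mul_of_nonneg_left (hup2.trans hcore) (abs_nonneg s)
    _ = 20 * (|s| * ‖Complex.I * w * ((Real.cos s : ℝ):ℂ) * Complex.cosh w -
          ((Real.sin s : ℝ):ℂ) * Complex.sinh w‖) := by ring
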